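/- Suppose 1 ≤ R < m and Σ_{k≥1} μ_k R^{−k} < ∞, so that T is a bounded linear operator on ℓ²_R. Then for every complex number λ with |λ| > R, λ belongs to the spectrum of T if and only if λ ≠ m and μ̂(1/λ) = 1. (Note that the series μ̂(1/λ) = Σ_{k≥1} μ_k λ^{−k} converges absolutely since |1/λ| < 1/R.) -/

import Mathlib

open scoped BigOperators ENNReal

noncomputable section

abbrev H2 : Type := lp (fun _ : ℕ => ℂ) 2

/-- the vector `v = (m^{-k} 1[k ≥ 1])_k` -/
def vSeq (m : ℝ) : ℕ → ℂ := fun k => if k = 0 then 0 else ((m : ℂ))⁻¹ ^ k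

/-- the shift `S` -/
def shiftSeq (a : ℕ → ℂ) : ℕ → ℂ := fun k => if k = 0 then 0 else a (k - 1)

/-- the terms of the series defining `χ(a)` -/
def chiSum (μ : ℕ → ℝ) (a : ℕ → ℂ) : ℕ → ℂ := fun k => (μ (k+1) : ℂ) * (a (k+1) - a k)

/-- the linear functional `χ` -/
def chiSeq (μ : ℕ → ℝ) (a : ℕ → ℂ) : ℂ := ∑' k, chiSum μ a k

/-- the operator `T = S + χ(·) v` -/
def Tseq (μ : ℕ → ℝ) (m : ℝ) (a : ℕ → ℂ) : ℕ → ℂ :=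
  fun k => shiftSeq a k + chiSeq μ a * vSeq m k

/-- membership in `ℓ²_R` -/
def memEllR (R : ℝ) (a : ℕ → ℂ) : Prop :=
  Summable fun k => R ^ (2 * k) * ‖a k‖ ^ 2

/-- from the standard `ℓ²` model to an `ℓ²_R` sequence -/
def fromModel (R : ℝ) (b : ℕ → ℂ) : ℕ → ℂ := fun k => ((R : ℂ))⁻¹ ^ k * b k

/-- from an `ℓ²_R` sequence to its standard `ℓ²` model -/
def toModel (R : ℝ) (a : ℕ → ℂ) : ℕ → ℂ := fun k => (R : ℂ) ^ k * a k

/-- the generating function `μ̂(z) = Σ_{k≥1} μ_k z^k` -/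
def genFun (μ : ℕ → ℝ) (z : ℂ) : ℂ := ∑' k, (μ (k+1) : ℂ) * z ^ (k+1)

/-- `T'` is the bounded operator on the standard `ℓ²` model corresponding to `T` on `ℓ²_R`
under the isometric isomorphism `(a_k)_k ↦ (R^k a_k)_k`. -/
def Intertwines (μ : ℕ → ℝ) (m R : ℝ) (T' : H2 →L[ℂ] H2) : Prop :=
  ∀ b : H2, ∀ k, (T' b : ℕ → ℂ) k = toModel R (Tseq μ m (fromModel R (b : ℕ → ℂ))) k



section Aux

lemma toReal_two : (2 : ℝ≥0∞).toReal = 2 := by norm_num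

lemma memℓp_of_le {f : ℕ → ℂ} {g : ℕ → ℝ} (hg : Summable fun k => g k ^ 2)
    (h : ∀ k, ‖f k‖ ≤ g k) : Memℓp f 2 := by
  apply memℓp_gen
  have h2 : ∀ k : ℕ, ‖f k‖ ^ (2 : ℝ≥0∞).toReal = ‖f k‖ ^ (2:ℕ) := by
    intro k; rw [toReal_two]; norm_num [Real.rpow_natCast ‖f k‖ 2]
  simp only [h2]
  exact hg.of_nonneg_of_le (fun k => by positivity)
    (fun k => by exact pow_le_pow_left₀ (norm_nonneg _) (h k) 2)

lemma summable_sq (b : H2) : Summable fun k => ‖(b : ℕ → ℂ) k‖ ^ (2 : ℝ≥0∞).toReal :=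
  (lp.memℓp b).summable (by rw [toReal_two]; norm_num)

lemma memℓp_shift (b : H2) : Memℓp (shiftSeq b) 2 := by
  apply memℓp_gen
  have := summable_sq b
  have h1 : Summable fun k : ℕ => ‖shiftSeq (b : ℕ → ℂ) (k + 1)‖ ^ (2 : ℝ≥0∞).toReal := by
    simpa [shiftSeq] using this
  exact (summable_nat_add_iff 1).mp h1

def shiftLM : H2 →ₗ[ℂ] H2 where
  toFun b := ⟨shiftSeq b, memℓp_shift b⟩
  map_add' b b' := by
    apply lp.ext; funext k
    simp only [lp.coeFn_add, Pi.add_apply, shiftSeq]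
    split <;> simp [lp.coeFn_add]
  map_smul' c b := by
    apply lp.ext; funext k
    simp only [lp.coeFn_smul, Pi.smul_apply, shiftSeq, RingHom.id_apply]
    split <;> simp [lp.coeFn_smul]

lemma shiftLM_norm (b : H2) : ‖shiftLM b‖ ≤ 1 * ‖b‖ := by
  rw [one_mul]
  apply lp.norm_le_of_tsum_le (by rw [toReal_two]; norm_num) (norm_nonneg b)
  rw [show ((shiftLM b : H2) : ℕ → ℂ) = shiftSeq b from rfl]
  have hs : Summable fun k : ℕ => ‖shiftSeq (b : ℕ → ℂ) k‖ ^ (2 : ℝ≥0∞).toReal :=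
    (memℓp_shift b).summable (by rw [toReal_two]; norm_num)
  rw [Summable.tsum_eq_zero_add hs]
  have h0 : ‖shiftSeq (b : ℕ → ℂ) 0‖ ^ (2 : ℝ≥0∞).toReal = 0 := by
    simp [shiftSeq, toReal_two]
  rw [h0, zero_add]
  have h1 : ∀ k : ℕ, ‖shiftSeq (b : ℕ → ℂ) (k + 1)‖ ^ (2 : ℝ≥0∞).toReal
      = ‖(b : ℕ → ℂ) k‖ ^ (2 : ℝ≥0∞).toReal := by intro k; simp [shiftSeq]
  rw [tsum_congr h1, ← lp.norm_rpow_eq_tsum (by rw [toReal_two]; norm_num) b]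

def shiftCLM : H2 →L[ℂ] H2 := shiftLM.mkContinuous 1 shiftLM_norm

lemma shiftCLM_apply (b : H2) (k : ℕ) : (shiftCLM b : ℕ → ℂ) k = shiftSeq b k := rfl
lemma shiftCLM_norm : ‖shiftCLM‖ ≤ 1 := LinearMap.mkContinuous_norm_le _ zero_le_one shiftLM_norm


section
variable {μ : ℕ → ℝ} {R : ℝ} (hR : 0 < R) (hμnn : ∀ k, 0 ≤ μ k)
  (hμR : Summable fun k : ℕ => μ (k + 1) * (R⁻¹) ^ (k + 1))

lemma apply_le_norm (b : H2) (k : ℕ) : ‖(b : ℕ → ℂ) k‖ ≤ ‖b‖ :=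
  lp.norm_apply_le_norm two_ne_zero b k

include hR in
lemma fromModel_apply_le (b : H2) (k : ℕ) :
    ‖fromModel R (b : ℕ → ℂ) k‖ ≤ R⁻¹ ^ k * ‖b‖ := by
  rw [fromModel, norm_mul]
  have h1 : ‖((R:ℂ))⁻¹ ^ k‖ = R⁻¹ ^ k := by
    rw [norm_pow, norm_inv, Complex.norm_real, Real.norm_eq_abs, abs_of_pos hR]
  rw [h1]
  exact mul_le_mul_of_nonneg_left (apply_le_norm b k) (by positivity)

include hR hμnn in
lemma chiSum_le (b : H2) (k : ℕ) :
    ‖chiSum μ (fromModel R (b : ℕ → ℂ)) k‖ ≤ (μ (k+1) * R⁻¹ ^ (k+1)) * ((1 + R) * ‖b‖) := by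
  have hb : ‖fromModel R (b : ℕ → ℂ) (k+1) - fromModel R (b : ℕ → ℂ) k‖
      ≤ R⁻¹ ^ (k+1) * ‖b‖ + R⁻¹ ^ k * ‖b‖ :=
    (norm_sub_le _ _).trans (add_le_add (fromModel_apply_le hR b (k+1)) (fromModel_apply_le hR b k))
  have h2 : (R:ℝ)⁻¹ ^ k = R * R⁻¹ ^ (k+1) := by
    rw [pow_succ]; field_simp
  rw [chiSum, norm_mul, Complex.norm_real, Real.norm_eq_abs, abs_of_nonneg (hμnn (k+1))]
  calc μ (k+1) * ‖fromModel R (b : ℕ → ℂ) (k+1) - fromModel R (b : ℕ → ℂ) k‖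
      ≤ μ (k+1) * (R⁻¹ ^ (k+1) * ‖b‖ + R⁻¹ ^ k * ‖b‖) :=
        mul_le_mul_of_nonneg_left hb (hμnn (k+1))
    _ = (μ (k+1) * R⁻¹ ^ (k+1)) * ((1 + R) * ‖b‖) := by rw [h2]; ring

include hR hμnn hμR in
lemma chi_summable (b : H2) : Summable (chiSum μ (fromModel R (b : ℕ → ℂ))) := by
  apply Summable.of_norm
  exact (hμR.mul_right ((1 + R) * ‖b‖)).of_nonneg_of_le (fun k => norm_nonneg _)
    (fun k => chiSum_le hR hμnn b k)

include hR hμnn hμR in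
lemma chi_norm_le (b : H2) :
    ‖chiSeq μ (fromModel R (b : ℕ → ℂ))‖
      ≤ ((1 + R) * ∑' k, μ (k + 1) * (R⁻¹) ^ (k + 1)) * ‖b‖ := by
  rw [chiSeq]
  calc ‖∑' k, chiSum μ (fromModel R (b : ℕ → ℂ)) k‖
      ≤ ∑' k, ‖chiSum μ (fromModel R (b : ℕ → ℂ)) k‖ :=
        norm_tsum_le_tsum_norm ((chi_summable hR hμnn hμR b).norm)
    _ ≤ ∑' k, (μ (k+1) * R⁻¹ ^ (k+1)) * ((1 + R) * ‖b‖) :=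
        Summable.tsum_le_tsum (fun k => chiSum_le hR hμnn b k)
          ((chi_summable hR hμnn hμR b).norm) (hμR.mul_right _)
    _ = ((1 + R) * ∑' k, μ (k + 1) * (R⁻¹) ^ (k + 1)) * ‖b‖ := by
        rw [tsum_mul_right]; ring

lemma fromModel_add (b b' : H2) :
    fromModel R ((b + b' : H2) : ℕ → ℂ) = fromModel R b + fromModel R b' := by
  funext k; simp [fromModel, lp.coeFn_add, mul_add]

lemma fromModel_smul (c : ℂ) (b : H2) :
    fromModel R ((c • b : H2) : ℕ → ℂ) = c • fromModel R (b : ℕ → ℂ) := by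
  funext k; simp [fromModel, lp.coeFn_smul]; ring

include hR hμnn hμR in
lemma chi_add (b b' : H2) :
    chiSeq μ (fromModel R ((b + b' : H2) : ℕ → ℂ))
      = chiSeq μ (fromModel R b) + chiSeq μ (fromModel R b') := by
  rw [chiSeq, chiSeq, chiSeq, fromModel_add, ← Summable.tsum_add (chi_summable hR hμnn hμR b)
    (chi_summable hR hμnn hμR b')]
  apply tsum_congr; intro k
  simp only [chiSum, Pi.add_apply]; ring

lemma chi_smul (c : ℂ) (b : H2) :
    chiSeq μ (fromModel R ((c • b : H2) : ℕ → ℂ)) = c * chiSeq μ (fromModel R b) := by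
  rw [chiSeq, chiSeq, fromModel_smul, ← tsum_mul_left]
  apply tsum_congr; intro k
  simp only [chiSum, Pi.smul_apply, smul_eq_mul]; ring

def chiCLM (hR : 0 < R) (hμnn : ∀ k, 0 ≤ μ k)
    (hμR : Summable fun k : ℕ => μ (k + 1) * (R⁻¹) ^ (k + 1)) : H2 →L[ℂ] ℂ :=
  LinearMap.mkContinuous
    { toFun := fun b => chiSeq μ (fromModel R (b : ℕ → ℂ))
      map_add' := chi_add hR hμnn hμR
      map_smul' := chi_smul }
    ((1 + R) * ∑' k, μ (k + 1) * (R⁻¹) ^ (k + 1))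
    (chi_norm_le hR hμnn hμR)

lemma chiCLM_apply (b : H2) : chiCLM hR hμnn hμR b = chiSeq μ (fromModel R (b : ℕ → ℂ)) := rfl
end


def aSeq (m : ℝ) (lam : ℂ) : ℕ → ℂ
  | 0 => 0
  | k+1 => (aSeq m lam k + ((m:ℂ))⁻¹ ^ (k+1)) / lam

section
variable {m R : ℝ} {lam : ℂ}

lemma aSeq_rec (hlam : lam ≠ 0) (k : ℕ) :
    lam * aSeq m lam (k+1) = aSeq m lam k + ((m:ℂ))⁻¹ ^ (k+1) := by
  rw [show aSeq m lam (k+1) = (aSeq m lam k + ((m:ℂ))⁻¹ ^ (k+1)) / lam from rfl]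
  field_simp

lemma norm_m_pow_inv (hm : 0 < m) (k : ℕ) : ‖((m:ℂ))⁻¹ ^ k‖ = m⁻¹ ^ k := by
  rw [norm_pow, norm_inv, Complex.norm_real, Real.norm_eq_abs, abs_of_pos hm]

lemma aSeq_bound (hm : 0 < m) (hR : 0 < R) (hl1 : 1 ≤ ‖lam‖) (k : ℕ) :
    R ^ k * ‖aSeq m lam k‖ ≤ k * (max (R/m) (R/‖lam‖)) ^ k := by
  set q := max (R/m) (R/‖lam‖) with hq
  have hlam0 : (0:ℝ) < ‖lam‖ := lt_of_lt_of_le one_pos hl1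
  have hq0 : 0 < q := lt_of_lt_of_le (div_pos hR hlam0) (le_max_right _ _)
  induction k with
  | zero => simp [aSeq]
  | succ k ih =>
    have h1 : ‖aSeq m lam (k+1)‖ ≤ (‖aSeq m lam k‖ + m⁻¹ ^ (k+1)) / ‖lam‖ := by
      rw [show aSeq m lam (k+1) = (aSeq m lam k + ((m:ℂ))⁻¹ ^ (k+1)) / lam from rfl,
        norm_div]
      gcongr
      exact (norm_add_le _ _).trans (by rw [norm_m_pow_inv hm])
    calc R ^ (k+1) * ‖aSeq m lam (k+1)‖
        ≤ R ^ (k+1) * ((‖aSeq m lam k‖ + m⁻¹ ^ (k+1)) / ‖lam‖) := by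
          exact mul_le_mul_of_nonneg_left h1 (by positivity)
      _ = (R/‖lam‖) * (R ^ k * ‖aSeq m lam k‖) + (R/m) ^ (k+1) / ‖lam‖ := by
          rw [div_pow, div_eq_mul_inv (R^(k+1)), ← inv_pow]; ring
      _ ≤ q * ((k:ℝ) * q ^ k) + q ^ (k+1) / 1 := by
          apply add_le_add
          · exact mul_le_mul (le_max_right _ _) ih (by positivity) (le_of_lt hq0)
          · apply div_le_div₀ (by positivity) _ one_pos hl1
            exact pow_le_pow_left₀ (by positivity) (le_max_left _ _) (k+1)
      _ = ((k:ℝ) + 1) * q ^ (k+1) := by rw [div_one, pow_succ]; ring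
      _ = ((k+1 : ℕ) : ℝ) * q ^ (k+1) := by push_cast; ring

lemma aSeq_closed (hm0 : (m:ℂ) ≠ 0) (hlam0 : lam ≠ 0) (hne : lam ≠ (m:ℂ)) (k : ℕ) :
    aSeq m lam k = (((m:ℂ))⁻¹ ^ k - lam⁻¹ ^ k) / (lam - (m:ℂ)) := by
  have hsub : lam - (m:ℂ) ≠ 0 := sub_ne_zero_of_ne hne
  induction k with
  | zero => simp [aSeq]
  | succ k ih =>
    have key : ((m:ℂ))⁻¹ ^ k - lam⁻¹ ^ k + ((m:ℂ))⁻¹ ^ (k+1) * (lam - (m:ℂ))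
        = lam * (((m:ℂ))⁻¹ ^ (k+1) - lam⁻¹ ^ (k+1)) := by
      have h1 : (m:ℂ) * (m:ℂ)⁻¹ = 1 := mul_inv_cancel₀ hm0
      have h2 : lam * lam⁻¹ = 1 := mul_inv_cancel₀ hlam0
      linear_combination (-(m:ℂ)⁻¹ ^ k) * h1 + lam⁻¹ ^ k * h2
    rw [show aSeq m lam (k+1) = (aSeq m lam k + ((m:ℂ))⁻¹ ^ (k+1)) / lam from rfl, ih,
      div_add' _ _ _ hsub, div_div, key, mul_comm (lam - (m:ℂ)) lam, mul_div_mul_left _ _ hlam0]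

lemma aSeq_self (hm0 : (m:ℂ) ≠ 0) (k : ℕ) :
    aSeq m (m:ℂ) k = (k : ℂ) * ((m:ℂ))⁻¹ ^ (k+1) := by
  induction k with
  | zero => simp [aSeq]
  | succ k ih =>
    rw [show aSeq m (m:ℂ) (k+1) = (aSeq m (m:ℂ) k + ((m:ℂ))⁻¹ ^ (k+1)) / (m:ℂ) from rfl, ih]
    push_cast
    rw [div_eq_iff hm0]
    have h1 : (m:ℂ) * (m:ℂ)⁻¹ = 1 := mul_inv_cancel₀ hm0
    linear_combination (-((k:ℂ)+1) * (m:ℂ)⁻¹ ^ (k+1)) * h1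
end



section RankOne
open ContinuousLinearMap
variable {E : Type*} [NormedAddCommGroup E] [NormedSpace ℂ E]

lemma smulRight_mul_smulRight (φ : E →L[ℂ] ℂ) (u : E) :
    (φ.smulRight u) * (φ.smulRight u) = φ u • φ.smulRight u := by
  ext x
  simp only [ContinuousLinearMap.mul_apply, smulRight_apply, map_smul, smul_eq_mul, coe_smul', Pi.smul_apply,
    smul_smul]
  rw [mul_comm]

lemma isUnit_one_sub_smulRight (φ : E →L[ℂ] ℂ) (u : E) :
    IsUnit ((1 : E →L[ℂ] E) - φ.smulRight u) ↔ φ u ≠ 1 := by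
  constructor
  · intro h heq
    obtain ⟨U, hU⟩ := h
    have hker : ((1 : E →L[ℂ] E) - φ.smulRight u) u = 0 := by
      simp [sub_apply, smulRight_apply, heq]
    have hu0 : u = 0 := by
      have h2 : (↑U⁻¹ * ↑U : E →L[ℂ] E) u = u := by rw [U.inv_mul]; simp
      rw [ContinuousLinearMap.mul_apply, hU, hker, map_zero] at h2
      exact h2.symm
    rw [hu0, map_zero] at heq
    exact one_ne_zero heq.symm
  · intro h
    have hne : (1 : ℂ) - φ u ≠ 0 := sub_ne_zero_of_ne (Ne.symm h)
    set c : ℂ := (1 - φ u)⁻¹ with hc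
    have hc1 : c * (1 - φ u) = 1 := inv_mul_cancel₀ hne
    set M := φ.smulRight u with hM
    refine ⟨⟨1 - M, 1 + c • M, ?_, ?_⟩, rfl⟩
    · ext x
      simp only [ContinuousLinearMap.mul_apply, add_apply, ContinuousLinearMap.one_apply, sub_apply, smulRight_apply, coe_smul',
        Pi.smul_apply, map_add, map_smul, map_sub, smul_eq_mul, smul_smul, hM]
      match_scalars
      · ring
      · linear_combination (φ x) * hc1
    · ext x
      simp only [ContinuousLinearMap.mul_apply, add_apply, ContinuousLinearMap.one_apply, sub_apply, smulRight_apply, coe_smul',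
        Pi.smul_apply, map_add, map_smul, map_sub, smul_eq_mul, smul_smul, hM]
      match_scalars
      · ring
      · linear_combination (φ x) * hc1

end RankOne



section
variable {μ : ℕ → ℝ} {m R : ℝ} {lam : ℂ}

lemma hasSum_mu_m (hm : 0 < m)
    (hμm : HasSum (fun k : ℕ => μ (k + 1) * (m⁻¹) ^ (k + 1)) 1) :
    HasSum (fun k => (μ (k+1) : ℂ) * ((m:ℂ))⁻¹ ^ (k+1)) 1 := by
  have h := Complex.hasSum_ofReal.mpr hμm
  rw [Complex.ofReal_one] at h
  have he : (fun k : ℕ => ((μ (k + 1) * m⁻¹ ^ (k + 1) : ℝ) : ℂ))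
      = fun k => (μ (k+1) : ℂ) * ((m:ℂ))⁻¹ ^ (k+1) := by
    funext k; push_cast; ring
  rwa [he] at h

lemma summable_muA (hm : 1 < m) (hμnn : ∀ k, 0 ≤ μ k)
    (hR1 : 1 ≤ R) (hRm : R < m)
    (hμR : Summable fun k : ℕ => μ (k + 1) * (R⁻¹) ^ (k + 1))
    (hlam : R < ‖lam‖) :
    Summable fun k => (μ (k+1) : ℂ) * aSeq m lam k := by
  have hR' : (0:ℝ) < R := lt_of_lt_of_le one_pos hR1
  have hm' : (0:ℝ) < m := lt_trans one_pos hm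
  set C := ∑' j, μ (j + 1) * (R⁻¹) ^ (j + 1) with hC
  have hC0 : 0 ≤ C := tsum_nonneg (fun j => by have := hμnn (j+1); positivity)
  set q := max (R/m) (R/‖lam‖) with hq
  have hq0 : 0 ≤ q := le_trans (le_of_lt (div_pos hR' hm')) (le_max_left _ _)
  have hq1 : q < 1 := max_lt (by rw [div_lt_one hm']; exact hRm)
    (by rw [div_lt_one (lt_of_le_of_lt (le_of_lt hR') hlam)]; exact hlam)
  apply Summable.of_norm
  have hsum : Summable fun k : ℕ => (C * R) * ((k:ℝ) ^ 1 * q ^ k) :=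
    (summable_pow_mul_geometric_of_norm_lt_one (R := ℝ) 1
      (by rw [Real.norm_eq_abs, abs_of_nonneg hq0]; exact hq1)).mul_left _
  apply hsum.of_nonneg_of_le (fun k => norm_nonneg _)
  intro k
  have hxy : R⁻¹ ^ (k+1) * R ^ (k+1) = 1 := by
    rw [← mul_pow, inv_mul_cancel₀ (ne_of_gt hR'), one_pow]
  calc ‖(μ (k+1) : ℂ) * aSeq m lam k‖
      = μ (k+1) * ‖aSeq m lam k‖ := by
        rw [norm_mul, Complex.norm_real, Real.norm_eq_abs, abs_of_nonneg (hμnn (k+1))]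
    _ = (μ (k+1) * R⁻¹ ^ (k+1)) * (R ^ (k+1) * ‖aSeq m lam k‖) := by
        rw [show (μ (k+1) * R⁻¹ ^ (k+1)) * (R ^ (k+1) * ‖aSeq m lam k‖)
          = (R⁻¹ ^ (k+1) * R ^ (k+1)) * (μ (k+1) * ‖aSeq m lam k‖) from by ring, hxy, one_mul]
    _ ≤ C * (R ^ (k+1) * ‖aSeq m lam k‖) := by
        apply mul_le_mul_of_nonneg_right _ (by positivity)
        exact Summable.le_tsum hμR k (fun j _ => by have := hμnn (j+1); positivity)
    _ = (C * R) * (R ^ k * ‖aSeq m lam k‖) := by rw [pow_succ]; ring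
    _ ≤ (C * R) * ((k:ℝ) * q ^ k) := by
        apply mul_le_mul_of_nonneg_left _ (by positivity)
        exact aSeq_bound hm' hR' (le_of_lt (lt_of_le_of_lt hR1 hlam)) k
    _ = (C * R) * ((k:ℝ) ^ 1 * q ^ k) := by rw [pow_one]

lemma chi_aSeq_eq (hm : 1 < m) (hμnn : ∀ k, 0 ≤ μ k)
    (hμm : HasSum (fun k : ℕ => μ (k + 1) * (m⁻¹) ^ (k + 1)) 1)
    (hR1 : 1 ≤ R) (hRm : R < m)
    (hμR : Summable fun k : ℕ => μ (k + 1) * (R⁻¹) ^ (k + 1))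
    (hlam : R < ‖lam‖) :
    chiSeq μ (aSeq m lam)
      = (1/lam - 1) * (∑' k, (μ (k+1) : ℂ) * aSeq m lam k) + 1/lam := by
  have hm' : (0:ℝ) < m := lt_trans one_pos hm
  have hlam0 : lam ≠ 0 := by
    intro h; rw [h, norm_zero] at hlam
    exact absurd hlam (not_lt.2 (le_of_lt (lt_of_lt_of_le one_pos hR1)))
  have hSm := hasSum_mu_m hm' hμm
  have hSA := summable_muA hm hμnn hR1 hRm hμR hlam
  have hterm : ∀ k, chiSum μ (aSeq m lam) k
      = (1/lam - 1) * ((μ (k+1) : ℂ) * aSeq m lam k)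
        + (1/lam) * ((μ (k+1) : ℂ) * ((m:ℂ))⁻¹ ^ (k+1)) := by
    intro k
    rw [chiSum, show aSeq m lam (k+1) = (aSeq m lam k + ((m:ℂ))⁻¹ ^ (k+1)) / lam from rfl,
      div_eq_mul_inv, one_div]
    ring
  rw [chiSeq, tsum_congr hterm,
    Summable.tsum_add (hSA.mul_left _) (hSm.summable.mul_left _), tsum_mul_left, tsum_mul_left,
    hSm.tsum_eq, mul_one]

lemma summable_glam (hμnn : ∀ k, 0 ≤ μ k) (hR1 : 1 ≤ R)
    (hμR : Summable fun k : ℕ => μ (k + 1) * (R⁻¹) ^ (k + 1))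
    (hlam : R < ‖lam‖) :
    Summable fun k => (μ (k+1) : ℂ) * (lam⁻¹) ^ (k+1) := by
  have hR' : (0:ℝ) < R := lt_of_lt_of_le one_pos hR1
  apply Summable.of_norm
  apply hμR.of_nonneg_of_le (fun k => norm_nonneg _)
  intro k
  rw [norm_mul, Complex.norm_real, Real.norm_eq_abs, abs_of_nonneg (hμnn (k+1)), norm_pow,
    norm_inv]
  apply mul_le_mul_of_nonneg_left _ (hμnn (k+1))
  apply pow_le_pow_left₀ (by positivity)
  exact inv_anti₀ hR' (le_of_lt hlam)

lemma A_eq (hm : 1 < m) (hμnn : ∀ k, 0 ≤ μ k)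
    (hμm : HasSum (fun k : ℕ => μ (k + 1) * (m⁻¹) ^ (k + 1)) 1)
    (hR1 : 1 ≤ R) (hRm : R < m)
    (hμR : Summable fun k : ℕ => μ (k + 1) * (R⁻¹) ^ (k + 1))
    (hlam : R < ‖lam‖) (hne : lam ≠ (m:ℂ)) :
    (∑' k, (μ (k+1) : ℂ) * aSeq m lam k)
      = ((m:ℂ) - lam * genFun μ lam⁻¹) / (lam - (m:ℂ)) := by
  have hm' : (0:ℝ) < m := lt_trans one_pos hm
  have hm0 : (m:ℂ) ≠ 0 := by
    simpa using ne_of_gt hm'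
  have hlam0 : lam ≠ 0 := by
    intro h; rw [h, norm_zero] at hlam
    exact absurd hlam (not_lt.2 (le_of_lt (lt_of_lt_of_le one_pos hR1)))
  have hSm := hasSum_mu_m hm' hμm
  have hSm' : HasSum (fun k => (μ (k+1) : ℂ) * ((m:ℂ))⁻¹ ^ k) (m:ℂ) := by
    have h2 := hSm.mul_left (m:ℂ)
    rw [mul_one] at h2
    have he : (fun k : ℕ => (m:ℂ) * ((μ (k+1) : ℂ) * ((m:ℂ))⁻¹ ^ (k+1)))
        = fun k => (μ (k+1) : ℂ) * ((m:ℂ))⁻¹ ^ k := by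
      funext k
      rw [pow_succ]
      field_simp
    rwa [he] at h2
  have hgs := (summable_glam hμnn hR1 hμR hlam).hasSum
  have hSl : HasSum (fun k => (μ (k+1) : ℂ) * lam⁻¹ ^ k) (lam * genFun μ lam⁻¹) := by
    have h2 := hgs.mul_left lam
    have he : (fun k : ℕ => lam * ((μ (k+1) : ℂ) * lam⁻¹ ^ (k+1)))
        = fun k => (μ (k+1) : ℂ) * lam⁻¹ ^ k := by
      funext k
      rw [pow_succ]
      field_simp
    rw [he] at h2
    exact h2
  have hA : HasSum (fun k => (μ (k+1) : ℂ) * aSeq m lam k)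
      (((m:ℂ) - lam * genFun μ lam⁻¹) * (lam - (m:ℂ))⁻¹) := by
    have h3 := ((hSm'.sub hSl).mul_right (lam - (m:ℂ))⁻¹)
    have he : (fun k : ℕ => ((μ (k+1) : ℂ) * ((m:ℂ))⁻¹ ^ k - (μ (k+1) : ℂ) * lam⁻¹ ^ k)
        * (lam - (m:ℂ))⁻¹) = fun k => (μ (k+1) : ℂ) * aSeq m lam k := by
      funext k
      rw [aSeq_closed hm0 hlam0 hne k, div_eq_mul_inv]
      ring
    rwa [he] at h3
  rw [hA.tsum_eq, div_eq_mul_inv]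

lemma chi_iff_ne (hm : 1 < m) (hμnn : ∀ k, 0 ≤ μ k)
    (hμm : HasSum (fun k : ℕ => μ (k + 1) * (m⁻¹) ^ (k + 1)) 1)
    (hR1 : 1 ≤ R) (hRm : R < m)
    (hμR : Summable fun k : ℕ => μ (k + 1) * (R⁻¹) ^ (k + 1))
    (hlam : R < ‖lam‖) (hne : lam ≠ (m:ℂ)) :
    chiSeq μ (aSeq m lam) = 1 ↔ genFun μ lam⁻¹ = 1 := by
  have hlam0 : lam ≠ 0 := by
    intro h; rw [h, norm_zero] at hlam
    exact absurd hlam (not_lt.2 (le_of_lt (lt_of_lt_of_le one_pos hR1)))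
  have hlam1 : lam ≠ 1 := by
    intro h; rw [h, norm_one] at hlam
    exact absurd (lt_of_le_of_lt hR1 hlam) (lt_irrefl 1)
  have hsub : lam - (m:ℂ) ≠ 0 := sub_ne_zero_of_ne hne
  have key : chiSeq μ (aSeq m lam) - 1
      = (1 - lam) * (1 - genFun μ lam⁻¹) / (lam - (m:ℂ)) := by
    rw [chi_aSeq_eq hm hμnn hμm hR1 hRm hμR hlam,
      A_eq hm hμnn hμm hR1 hRm hμR hlam hne]
    field_simp
    ring
  rw [← sub_eq_zero, key, div_eq_zero_iff]
  constructor
  · rintro (h | h)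
    · rcases mul_eq_zero.mp h with h1 | h2
      · exact absurd (sub_eq_zero.mp h1).symm hlam1
      · exact (sub_eq_zero.mp h2).symm
    · exact absurd h hsub
  · intro h
    left
    rw [h, sub_self, mul_zero]

lemma chi_ne_at_m (hm : 1 < m) (hμnn : ∀ k, 0 ≤ μ k)
    (hμm : HasSum (fun k : ℕ => μ (k + 1) * (m⁻¹) ^ (k + 1)) 1)
    (hR1 : 1 ≤ R) (hRm : R < m)
    (hμR : Summable fun k : ℕ => μ (k + 1) * (R⁻¹) ^ (k + 1)) :
    chiSeq μ (aSeq m ((m:ℂ))) ≠ 1 := by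
  have hm' : (0:ℝ) < m := lt_trans one_pos hm
  have hm0 : (m:ℂ) ≠ 0 := by simpa using ne_of_gt hm'
  have hlamm : R < ‖((m:ℂ))‖ := by
    rwa [Complex.norm_real, Real.norm_eq_abs, abs_of_pos hm']
  have hA : (∑' k, (μ (k+1) : ℂ) * aSeq m ((m:ℂ)) k)
      = ((∑' k, μ (k+1) * ((k : ℝ) * m⁻¹ ^ (k+1)) : ℝ) : ℂ) := by
    rw [Complex.ofReal_tsum]
    apply tsum_congr
    intro k
    rw [aSeq_self hm0 k]
    push_cast
    ring
  set t : ℝ := ∑' k, μ (k+1) * ((k : ℝ) * m⁻¹ ^ (k+1)) with ht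
  have ht0 : 0 ≤ t := tsum_nonneg (fun k => by
    have := hμnn (k+1); positivity)
  have key : chiSeq μ (aSeq m ((m:ℂ))) - 1
      = ((1 - (m:ℂ))/(m:ℂ)) * ((t:ℂ) + 1) := by
    rw [chi_aSeq_eq hm hμnn hμm hR1 hRm hμR hlamm, hA]
    field_simp
    ring
  intro hcontra
  rw [hcontra, sub_self] at key
  have h1 : (1 - (m:ℂ))/(m:ℂ) ≠ 0 := by
    apply div_ne_zero _ hm0
    rw [sub_ne_zero]
    intro h
    have : (m:ℝ) = 1 := by exact_mod_cast h.symm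
    linarith
  have h2 : ((t:ℂ) + 1) ≠ 0 := by
    have he : ((t:ℂ) + 1) = ((t + 1 : ℝ) : ℂ) := by push_cast; ring
    rw [he]
    simp only [ne_eq, Complex.ofReal_eq_zero]
    intro h
    linarith
  exact absurd key.symm (mul_ne_zero h1 h2)

end

end Aux

set_option maxHeartbeats 1000000 in
/-- Under the standing hypotheses, for `|λ| > R`:
`λ` is in the spectrum of `T` iff `λ ≠ m` and `μ̂(1/λ) = 1`. -/
theorem statement1
    (μ : ℕ → ℝ) (m R : ℝ)
    (hm : 1 < m) (hμnn : ∀ k, 0 ≤ μ k)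
    (hμm : HasSum (fun k : ℕ => μ (k + 1) * (m⁻¹) ^ (k + 1)) 1)
    (hR1 : 1 ≤ R) (hRm : R < m)
    (hμR : Summable fun k : ℕ => μ (k + 1) * (R⁻¹) ^ (k + 1))
    (T' : H2 →L[ℂ] H2) (hT' : Intertwines μ m R T')
    (lam : ℂ) (hlam : R < ‖lam‖) :
    lam ∈ spectrum ℂ T' ↔ (lam ≠ (m : ℂ) ∧ genFun μ lam⁻¹ = 1) := by
  classical
  have hR' : (0:ℝ) < R := lt_of_lt_of_le one_pos hR1
  have hm' : (0:ℝ) < m := lt_trans one_pos hm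
  have hRC : ((R:ℂ)) ≠ 0 := by simpa using ne_of_gt hR'
  have hlam0 : lam ≠ 0 := by
    intro h; rw [h, norm_zero] at hlam
    exact absurd hlam (not_lt.2 (le_of_lt hR'))
  have hl1 : 1 ≤ ‖lam‖ := le_of_lt (lt_of_le_of_lt hR1 hlam)
  -- the vector v in the model space
  have hvmem : Memℓp (toModel R (vSeq m)) 2 := by
    apply memℓp_of_le (g := fun k => (R/m) ^ k)
    · have h1 : Summable fun k : ℕ => ((R/m) ^ 2) ^ k := by
        apply summable_geometric_of_lt_one (by positivity)
        have : R / m < 1 := by rw [div_lt_one hm']; exact hRm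
        nlinarith [div_pos hR' hm']
      apply h1.congr
      intro k
      rw [← pow_mul, mul_comm 2 k, pow_mul]
    · intro k
      match k with
      | 0 => simp [toModel, vSeq]
      | (j+1) =>
        rw [toModel, vSeq, if_neg (Nat.succ_ne_zero j), norm_mul, norm_pow, norm_pow,
          norm_inv, Complex.norm_real, Complex.norm_real, Real.norm_eq_abs, Real.norm_eq_abs,
          abs_of_pos hR', abs_of_pos hm', div_pow, div_eq_mul_inv, inv_pow]
  -- the eigen-candidate vector a in the model space
  have hamem : Memℓp (toModel R (aSeq m lam)) 2 := by
    set q := max (R/m) (R/‖lam‖) with hq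
    have hq0 : 0 ≤ q := le_trans (le_of_lt (div_pos hR' hm')) (le_max_left _ _)
    have hq1 : q < 1 := max_lt (by rw [div_lt_one hm']; exact hRm)
      (by rw [div_lt_one (lt_of_lt_of_le hR' (le_of_lt hlam))]; exact hlam)
    apply memℓp_of_le (g := fun k => (k : ℝ) * q ^ k)
    · have h1 : Summable fun k : ℕ => (k:ℝ) ^ 2 * (q ^ 2) ^ k :=
        summable_pow_mul_geometric_of_norm_lt_one 2
          (by rw [Real.norm_eq_abs, abs_of_nonneg (by positivity)]; nlinarith)
      apply h1.congr
      intro k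
      rw [← pow_mul, mul_comm 2 k, pow_mul, mul_pow]
    · intro k
      rw [toModel, norm_mul, norm_pow, Complex.norm_real, Real.norm_eq_abs, abs_of_pos hR']
      exact aSeq_bound hm' hR' hl1 k
  set vMod : H2 := ⟨toModel R (vSeq m), hvmem⟩ with hvMod
  set aMod : H2 := ⟨toModel R (aSeq m lam), hamem⟩ with haMod
  set χ : H2 →L[ℂ] ℂ := chiCLM hR' hμnn hμR with hχ
  -- operator identity
  have hTop : T' = (R:ℂ) • shiftCLM + χ.smulRight vMod := by
    ext1 b
    apply lp.ext; funext k
    have hrhs : ((((R:ℂ) • shiftCLM + χ.smulRight vMod) b : H2) : ℕ → ℂ) k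
        = (R:ℂ) * shiftSeq (b : ℕ → ℂ) k + (χ b) * toModel R (vSeq m) k := by
      rw [ContinuousLinearMap.add_apply, lp.coeFn_add, Pi.add_apply,
        ContinuousLinearMap.smul_apply, lp.coeFn_smul, Pi.smul_apply,
        ContinuousLinearMap.smulRight_apply, lp.coeFn_smul, Pi.smul_apply]
      rfl
    rw [hT' b k, hrhs, hχ, chiCLM_apply]
    match k with
    | 0 => simp [Tseq, toModel, shiftSeq, vSeq]
    | (j+1) =>
      have hpow : ((R:ℂ)) ^ (j+1) * ((R:ℂ))⁻¹ ^ j = (R:ℂ) := by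
        rw [pow_succ, mul_comm ((R:ℂ) ^ j), mul_assoc, ← mul_pow, mul_inv_cancel₀ hRC,
          one_pow, mul_one]
      simp only [Tseq, toModel, fromModel, shiftSeq, vSeq, if_neg (Nat.succ_ne_zero j),
        Nat.add_sub_cancel]
      linear_combination ((b : ℕ → ℂ) j) * hpow
  -- the unit lam•1 - R•S
  have hnormS : ‖(lam⁻¹ * (R:ℂ)) • shiftCLM‖ < 1 := by
    calc ‖(lam⁻¹ * (R:ℂ)) • shiftCLM‖ = ‖lam⁻¹ * (R:ℂ)‖ * ‖shiftCLM‖ := norm_smul (lam⁻¹ * (R:ℂ)) shiftCLM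
      _ ≤ ‖lam⁻¹ * (R:ℂ)‖ * 1 :=
          mul_le_mul_of_nonneg_left shiftCLM_norm (norm_nonneg _)
      _ = R / ‖lam‖ := by
          rw [mul_one, norm_mul, norm_inv, Complex.norm_real, Real.norm_eq_abs,
            abs_of_pos hR']
          ring
      _ < 1 := by rw [div_lt_one (lt_of_lt_of_le hR' (le_of_lt hlam))]; exact hlam
  set W : (H2 →L[ℂ] H2)ˣ := Units.oneSub _ hnormS with hW
  set D : H2 →L[ℂ] H2 := lam • (1 : H2 →L[ℂ] H2) - (R:ℂ) • shiftCLM with hD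
  have hDW : D = lam • (W : H2 →L[ℂ] H2) := by
    rw [hD, hW, Units.val_oneSub, smul_sub, smul_smul, mul_inv_cancel_left₀ hlam0]
  have hDunit : IsUnit D := by
    rw [hDW, show lam • (W : H2 →L[ℂ] H2) = (lam • (1 : H2 →L[ℂ] H2)) * (W : H2 →L[ℂ] H2)
      from by rw [smul_mul_assoc, one_mul]]
    apply IsUnit.mul _ W.isUnit
    rw [← Algebra.algebraMap_eq_smul_one]
    exact (isUnit_iff_ne_zero.2 hlam0).map (algebraMap ℂ (H2 →L[ℂ] H2))
  obtain ⟨U, hU⟩ := hDunit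
  have hUa : D aMod = vMod := by
    apply lp.ext; funext k
    have hcoord : ((D aMod : H2) : ℕ → ℂ) k
        = lam * toModel R (aSeq m lam) k - (R:ℂ) * shiftSeq (toModel R (aSeq m lam)) k := by
      rw [hD, ContinuousLinearMap.sub_apply, lp.coeFn_sub, Pi.sub_apply,
        ContinuousLinearMap.smul_apply, lp.coeFn_smul, Pi.smul_apply,
        ContinuousLinearMap.smul_apply, lp.coeFn_smul, Pi.smul_apply,
        ContinuousLinearMap.one_apply]
      rfl
    rw [hcoord]
    match k with
    | 0 => show _ = toModel R (vSeq m) 0; simp [toModel, shiftSeq, vSeq, aSeq]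
    | (j+1) =>
      have hrec := aSeq_rec (m := m) hlam0 j
      show lam * toModel R (aSeq m lam) (j+1) - (R:ℂ) * shiftSeq (toModel R (aSeq m lam)) (j+1)
        = toModel R (vSeq m) (j+1)
      simp only [toModel, shiftSeq, vSeq, if_neg (Nat.succ_ne_zero j), Nat.add_sub_cancel]
      rw [pow_succ]
      linear_combination ((R:ℂ) ^ j * (R:ℂ)) * hrec
  have hUinva : (↑U⁻¹ : H2 →L[ℂ] H2) vMod = aMod := by
    have h5 : (↑U⁻¹ : H2 →L[ℂ] H2) (D aMod) = aMod := by
      rw [← hU, ← ContinuousLinearMap.mul_apply, U.inv_mul, ContinuousLinearMap.one_apply]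
    rwa [hUa] at h5
  -- spectrum membership characterization
  have hmem : lam ∈ spectrum ℂ T' ↔ chiSeq μ (aSeq m lam) = 1 := by
    rw [spectrum.mem_iff]
    have h1 : algebraMap ℂ (H2 →L[ℂ] H2) lam - T' = D - χ.smulRight vMod := by
      rw [hTop, Algebra.algebraMap_eq_smul_one, hD]
      abel
    have h2 : D - χ.smulRight vMod
        = (U : H2 →L[ℂ] H2) * (1 - (↑U⁻¹ : H2 →L[ℂ] H2) * χ.smulRight vMod) := by
      rw [mul_sub, mul_one, ← mul_assoc, U.mul_inv, one_mul, hU]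
    have h3 : (↑U⁻¹ : H2 →L[ℂ] H2) * χ.smulRight vMod = χ.smulRight aMod := by
      ext x
      rw [ContinuousLinearMap.mul_apply, ContinuousLinearMap.smulRight_apply,
        ContinuousLinearMap.smulRight_apply, map_smul, hUinva]
    have h4 : χ aMod = chiSeq μ (aSeq m lam) := by
      rw [hχ, chiCLM_apply]
      congr 1
      funext k
      rw [haMod]
      show ((R:ℂ))⁻¹ ^ k * (((R:ℂ)) ^ k * aSeq m lam k) = aSeq m lam k
      rw [← mul_assoc, ← mul_pow, inv_mul_cancel₀ hRC, one_pow, one_mul]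
    rw [h1, h2, h3, Units.isUnit_units_mul, isUnit_one_sub_smulRight, not_ne_iff, h4]
  rcases eq_or_ne lam ((m:ℂ)) with heq | hne
  · rw [hmem, heq]
    constructor
    · intro h
      exact absurd h (chi_ne_at_m hm hμnn hμm hR1 hRm hμR)
    · rintro ⟨h, -⟩
      exact absurd rfl h
  · rw [hmem, chi_iff_ne hm hμnn hμm hR1 hRm hμR hlam hne]
    exact ⟨fun h => ⟨hne, h⟩, fun h => h.2⟩
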